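/- In the 3-Dimensional Matching reduction, any cover T of the constructed universe with |T| ≤ 4 contains exactly one set from each of F_X, F_Y, F_Z, F^*; moreover if T = {s^X_{i1}, s^Y_{i2}, s^Z_{i3}, s^*_{i4}} then (x_{i1}, y_{i2}, z_{i3}) = e_{i4}. -/

import Mathlib

/-- The universe of the 3-Dimensional Matching reduction: elements `u^X_j, u^Y_j, u^Z_j`
(encoded as `(j, 0), (j, 1), (j, 2)`) and the four special elements `u_X, u_Y, u_Z, u_*`
(encoded as `Fin 4`). -/
def TDMUni (m : ℕ) := (Fin m × Fin 3) ⊕ Fin 4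

/-- The set `s^X_i`: all `u^X_j` with `x_{i} ` the first coordinate of `e_j`, plus `u_X`. -/
def sX {n m : ℕ} (M : Fin m → Fin n × Fin n × Fin n) (i : Fin n) : Set (TDMUni m) :=
  {w | (∃ j, w = Sum.inl (j, 0) ∧ (M j).1 = i) ∨ w = Sum.inr 0}

/-- The set `s^Y_i`. -/
def sY {n m : ℕ} (M : Fin m → Fin n × Fin n × Fin n) (i : Fin n) : Set (TDMUni m) :=
  {w | (∃ j, w = Sum.inl (j, 1) ∧ (M j).2.1 = i) ∨ w = Sum.inr 1}

/-- The set `s^Z_i`. -/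
def sZ {n m : ℕ} (M : Fin m → Fin n × Fin n × Fin n) (i : Fin n) : Set (TDMUni m) :=
  {w | (∃ j, w = Sum.inl (j, 2) ∧ (M j).2.2 = i) ∨ w = Sum.inr 2}

/-- The set `s^*_j`: all elements except `u^X_j, u^Y_j, u^Z_j, u_X, u_Y, u_Z`. -/
def sStar {m : ℕ} (j : Fin m) : Set (TDMUni m) :=
  {w | w ≠ Sum.inl (j, 0) ∧ w ≠ Sum.inl (j, 1) ∧ w ≠ Sum.inl (j, 2) ∧
       w ≠ Sum.inr 0 ∧ w ≠ Sum.inr 1 ∧ w ≠ Sum.inr 2}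

/-- The constructed family `F = F_X ∪ F_Y ∪ F_Z ∪ F^*` (as a multiset). -/
def TDMFam {n m : ℕ} (M : Fin m → Fin n × Fin n × Fin n) : Multiset (Set (TDMUni m)) :=
  (Finset.univ.val.map (sX M)) + (Finset.univ.val.map (sY M)) +
    (Finset.univ.val.map (sZ M)) + (Finset.univ.val.map sStar)


section Helpers

variable {n m : ℕ} {M : Fin m → Fin n × Fin n × Fin n}

lemma TD.inr_ne_inl (a : Fin 4) (p : Fin m × Fin 3) :
    (Sum.inr a : TDMUni m) ≠ Sum.inl p := fun h => by cases h

lemma TD.inl_ne_inr (p : Fin m × Fin 3) (a : Fin 4) :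
    (Sum.inl p : TDMUni m) ≠ Sum.inr a := fun h => by cases h

lemma TD.inr_inj {a b : Fin 4} (h : (Sum.inr a : TDMUni m) = Sum.inr b) : a = b :=
  Sum.inr.inj h

lemma TD.inl_inj {p q : Fin m × Fin 3} (h : (Sum.inl p : TDMUni m) = Sum.inl q) : p = q :=
  Sum.inl.inj h

lemma TD.inr_mem_sX {i : Fin n} {a : Fin 4} :
    (Sum.inr a : TDMUni m) ∈ sX M i ↔ a = 0 := by
  constructor
  · intro h
    simp only [sX, Set.mem_setOf_eq] at h
    rcases h with ⟨j, hj, -⟩ | hj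
    · exact absurd hj (TD.inr_ne_inl a _)
    · exact TD.inr_inj hj
  · rintro rfl
    simp only [sX, Set.mem_setOf_eq]
    exact Or.inr rfl

lemma TD.inr_mem_sY {i : Fin n} {a : Fin 4} :
    (Sum.inr a : TDMUni m) ∈ sY M i ↔ a = 1 := by
  constructor
  · intro h
    simp only [sY, Set.mem_setOf_eq] at h
    rcases h with ⟨j, hj, -⟩ | hj
    · exact absurd hj (TD.inr_ne_inl a _)
    · exact TD.inr_inj hj
  · rintro rfl
    simp only [sY, Set.mem_setOf_eq]
    exact Or.inr rfl

lemma TD.inr_mem_sZ {i : Fin n} {a : Fin 4} :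
    (Sum.inr a : TDMUni m) ∈ sZ M i ↔ a = 2 := by
  constructor
  · intro h
    simp only [sZ, Set.mem_setOf_eq] at h
    rcases h with ⟨j, hj, -⟩ | hj
    · exact absurd hj (TD.inr_ne_inl a _)
    · exact TD.inr_inj hj
  · rintro rfl
    simp only [sZ, Set.mem_setOf_eq]
    exact Or.inr rfl

lemma TD.inr_mem_sStar {j : Fin m} {a : Fin 4} :
    (Sum.inr a : TDMUni m) ∈ sStar j ↔ a ≠ 0 ∧ a ≠ 1 ∧ a ≠ 2 := by
  constructor
  · intro h
    simp only [sStar, Set.mem_setOf_eq] at h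
    exact ⟨fun ha => h.2.2.2.1 (ha ▸ rfl), fun ha => h.2.2.2.2.1 (ha ▸ rfl),
      fun ha => h.2.2.2.2.2 (ha ▸ rfl)⟩
  · rintro ⟨h0, h1, h2⟩
    simp only [sStar, Set.mem_setOf_eq]
    exact ⟨TD.inr_ne_inl a _, TD.inr_ne_inl a _, TD.inr_ne_inl a _,
      fun h => h0 (TD.inr_inj h), fun h => h1 (TD.inr_inj h), fun h => h2 (TD.inr_inj h)⟩

lemma TD.inl_mem_sX {i : Fin n} {p : Fin m × Fin 3} :
    (Sum.inl p : TDMUni m) ∈ sX M i ↔ p.2 = 0 ∧ (M p.1).1 = i := by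
  obtain ⟨j, k⟩ := p
  constructor
  · intro h
    simp only [sX, Set.mem_setOf_eq] at h
    rcases h with ⟨j', hj, hji⟩ | hj
    · obtain ⟨h1, h2⟩ := Prod.mk.injEq .. ▸ TD.inl_inj hj
      exact ⟨h2, h1 ▸ hji⟩
    · exact absurd hj (TD.inl_ne_inr _ _)
  · rintro ⟨hk, hi⟩
    simp only [sX, Set.mem_setOf_eq]
    exact Or.inl ⟨j, by rw [show k = 0 from hk], hi⟩

lemma TD.inl_mem_sY {i : Fin n} {p : Fin m × Fin 3} :
    (Sum.inl p : TDMUni m) ∈ sY M i ↔ p.2 = 1 ∧ (M p.1).2.1 = i := by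
  obtain ⟨j, k⟩ := p
  constructor
  · intro h
    simp only [sY, Set.mem_setOf_eq] at h
    rcases h with ⟨j', hj, hji⟩ | hj
    · obtain ⟨h1, h2⟩ := Prod.mk.injEq .. ▸ TD.inl_inj hj
      exact ⟨h2, h1 ▸ hji⟩
    · exact absurd hj (TD.inl_ne_inr _ _)
  · rintro ⟨hk, hi⟩
    simp only [sY, Set.mem_setOf_eq]
    exact Or.inl ⟨j, by rw [show k = 1 from hk], hi⟩

lemma TD.inl_mem_sZ {i : Fin n} {p : Fin m × Fin 3} :
    (Sum.inl p : TDMUni m) ∈ sZ M i ↔ p.2 = 2 ∧ (M p.1).2.2 = i := by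
  obtain ⟨j, k⟩ := p
  constructor
  · intro h
    simp only [sZ, Set.mem_setOf_eq] at h
    rcases h with ⟨j', hj, hji⟩ | hj
    · obtain ⟨h1, h2⟩ := Prod.mk.injEq .. ▸ TD.inl_inj hj
      exact ⟨h2, h1 ▸ hji⟩
    · exact absurd hj (TD.inl_ne_inr _ _)
  · rintro ⟨hk, hi⟩
    simp only [sZ, Set.mem_setOf_eq]
    exact Or.inl ⟨j, by rw [show k = 2 from hk], hi⟩

lemma TD.inl_notmem_sStar (j : Fin m) (k : Fin 3) :
    (Sum.inl (j, k) : TDMUni m) ∉ sStar j := by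
  intro h
  simp only [sStar, Set.mem_setOf_eq] at h
  fin_cases k
  · exact h.1 rfl
  · exact h.2.1 rfl
  · exact h.2.2.1 rfl

end Helpers

open Classical in
/-- In the 3-Dimensional Matching reduction, any cover `T` of the constructed universe
with `|T| ≤ 4` contains exactly one set from each of `F_X`, `F_Y`, `F_Z`, `F^*`; moreover
if `T = {s^X_{i₁}, s^Y_{i₂}, s^Z_{i₃}, s^*_{i₄}}` then `(x_{i₁}, y_{i₂}, z_{i₃}) = e_{i₄}`. -/
theorem stmt10 (n m : ℕ) (M : Fin m → Fin n × Fin n × Fin n)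
    (T : Finset (Set (TDMUni m)))
    (hfam : ↑T ⊆ Set.range (sX M) ∪ Set.range (sY M) ∪ Set.range (sZ M) ∪
      Set.range (sStar : Fin m → Set (TDMUni m)))
    (hcard : T.card ≤ 4)
    (hcover : ∀ w : TDMUni m, ∃ A ∈ T, w ∈ A) :
    ∃ (i₁ i₂ i₃ : Fin n) (i₄ : Fin m),
      T = {sX M i₁, sY M i₂, sZ M i₃, sStar i₄} ∧ M i₄ = (i₁, i₂, i₃) := by
  obtain ⟨A, hAT, hA0⟩ := hcover (Sum.inr 0)
  obtain ⟨B, hBT, hB1⟩ := hcover (Sum.inr 1)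
  obtain ⟨C, hCT, hC2⟩ := hcover (Sum.inr 2)
  obtain ⟨D, hDT, hD3⟩ := hcover (Sum.inr 3)
  obtain ⟨i₁, rfl⟩ : ∃ i, A = sX M i := by
    rcases hfam hAT with ((⟨i, rfl⟩ | ⟨i, rfl⟩) | ⟨i, rfl⟩) | ⟨j, rfl⟩
    · exact ⟨i, rfl⟩
    · exact absurd (TD.inr_mem_sY.mp hA0) (by decide)
    · exact absurd (TD.inr_mem_sZ.mp hA0) (by decide)
    · exact absurd rfl (TD.inr_mem_sStar.mp hA0).1
  obtain ⟨i₂, rfl⟩ : ∃ i, B = sY M i := by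
    rcases hfam hBT with ((⟨i, rfl⟩ | ⟨i, rfl⟩) | ⟨i, rfl⟩) | ⟨j, rfl⟩
    · exact absurd (TD.inr_mem_sX.mp hB1) (by decide)
    · exact ⟨i, rfl⟩
    · exact absurd (TD.inr_mem_sZ.mp hB1) (by decide)
    · exact absurd rfl (TD.inr_mem_sStar.mp hB1).2.1
  obtain ⟨i₃, rfl⟩ : ∃ i, C = sZ M i := by
    rcases hfam hCT with ((⟨i, rfl⟩ | ⟨i, rfl⟩) | ⟨i, rfl⟩) | ⟨j, rfl⟩
    · exact absurd (TD.inr_mem_sX.mp hC2) (by decide)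
    · exact absurd (TD.inr_mem_sY.mp hC2) (by decide)
    · exact ⟨i, rfl⟩
    · exact absurd rfl (TD.inr_mem_sStar.mp hC2).2.2
  obtain ⟨i₄, rfl⟩ : ∃ j, D = sStar j := by
    rcases hfam hDT with ((⟨i, rfl⟩ | ⟨i, rfl⟩) | ⟨i, rfl⟩) | ⟨j, rfl⟩
    · exact absurd (TD.inr_mem_sX.mp hD3) (by decide)
    · exact absurd (TD.inr_mem_sY.mp hD3) (by decide)
    · exact absurd (TD.inr_mem_sZ.mp hD3) (by decide)
    · exact ⟨j, rfl⟩
  have m0X : (Sum.inr 0 : TDMUni m) ∈ sX M i₁ := TD.inr_mem_sX.mpr rfl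
  have m1Y : (Sum.inr 1 : TDMUni m) ∈ sY M i₂ := TD.inr_mem_sY.mpr rfl
  have m2Z : (Sum.inr 2 : TDMUni m) ∈ sZ M i₃ := TD.inr_mem_sZ.mpr rfl
  have hXY : sX M i₁ ≠ sY M i₂ := fun h =>
    absurd (TD.inr_mem_sY.mp (h ▸ m0X)) (by decide)
  have hXZ : sX M i₁ ≠ sZ M i₃ := fun h =>
    absurd (TD.inr_mem_sZ.mp (h ▸ m0X)) (by decide)
  have hXS : sX M i₁ ≠ sStar i₄ := fun h =>
    absurd rfl (TD.inr_mem_sStar.mp (h ▸ m0X)).1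
  have hYZ : sY M i₂ ≠ sZ M i₃ := fun h =>
    absurd (TD.inr_mem_sZ.mp (h ▸ m1Y)) (by decide)
  have hYS : sY M i₂ ≠ sStar i₄ := fun h =>
    absurd rfl (TD.inr_mem_sStar.mp (h ▸ m1Y)).2.1
  have hZS : sZ M i₃ ≠ sStar i₄ := fun h =>
    absurd rfl (TD.inr_mem_sStar.mp (h ▸ m2Z)).2.2
  set S : Finset (Set (TDMUni m)) := {sX M i₁, sY M i₂, sZ M i₃, sStar i₄} with hS
  have hsub : S ⊆ T := by
    intro s hs
    simp only [hS, Finset.mem_insert, Finset.mem_singleton] at hs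
    rcases hs with rfl | rfl | rfl | rfl <;> assumption
  have hScard : S.card = 4 := by
    rw [hS, Finset.card_insert_of_notMem (by simp [hXY, hXZ, hXS]),
      Finset.card_insert_of_notMem (by simp [hYZ, hYS]),
      Finset.card_insert_of_notMem (by simp [hZS]), Finset.card_singleton]
  have hT : T = S := (Finset.eq_of_subset_of_card_le hsub (hScard ▸ hcard)).symm
  have key : ∀ k : Fin 3, ∃ A ∈ S, (Sum.inl (i₄, k) : TDMUni m) ∈ A := by
    intro k
    obtain ⟨A, hAT', hmem⟩ := hcover (Sum.inl (i₄, k))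
    exact ⟨A, hT ▸ hAT', hmem⟩
  have h1 : (M i₄).1 = i₁ := by
    obtain ⟨A, hAS, hmem⟩ := key 0
    simp only [hS, Finset.mem_insert, Finset.mem_singleton] at hAS
    rcases hAS with rfl | rfl | rfl | rfl
    · exact (TD.inl_mem_sX.mp hmem).2
    · exact absurd (TD.inl_mem_sY.mp hmem).1 (by simp)
    · exact absurd (TD.inl_mem_sZ.mp hmem).1 (by simp)
    · exact absurd hmem (TD.inl_notmem_sStar i₄ 0)
  have h2 : (M i₄).2.1 = i₂ := by
    obtain ⟨A, hAS, hmem⟩ := key 1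
    simp only [hS, Finset.mem_insert, Finset.mem_singleton] at hAS
    rcases hAS with rfl | rfl | rfl | rfl
    · exact absurd (TD.inl_mem_sX.mp hmem).1 (by simp)
    · exact (TD.inl_mem_sY.mp hmem).2
    · exact absurd (TD.inl_mem_sZ.mp hmem).1 (by simp)
    · exact absurd hmem (TD.inl_notmem_sStar i₄ 1)
  have h3 : (M i₄).2.2 = i₃ := by
    obtain ⟨A, hAS, hmem⟩ := key 2
    simp only [hS, Finset.mem_insert, Finset.mem_singleton] at hAS
    rcases hAS with rfl | rfl | rfl | rfl
    · exact absurd (TD.inl_mem_sX.mp hmem).1 (by simp)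
    · exact absurd (TD.inl_mem_sY.mp hmem).1 (by simp)
    · exact (TD.inl_mem_sZ.mp hmem).2
    · exact absurd hmem (TD.inl_notmem_sStar i₄ 2)
  exact ⟨i₁, i₂, i₃, i₄, hT, by rw [← h1, ← h2, ← h3]⟩
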